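/- Consider a latent class model with M > 2 latent classes and J binary items, where p_{jα} = P(Y^j = 1 | α). Assume: (A1) there exist three pairwise disjoint subsets I₁, I₂, I₃ of the items such that for every pair of distinct classes α₁ ≠ α₂ and each l = 1, 2, 3, the conditional joint distributions of the responses (Y^j : j ∈ I_l) under class α₁ and under class α₂ are distinct; (A2) for each item j ∈ I₁ ∪ I₂ ∪ I₃, the values p_{jα}, α = 1,…,M, take exactly two distinct values; (A3) π_α > 0 for every class α. Then the item response probabilities p_{jα} for all items j = 1,…,J and the class proportions π_α are identifiable up to a permutation of the class labels. -/

import Mathlib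

open Finset Matrix

private lemma lcm_contract_one {J M : ℕ} (F G : Fin J → Bool → Fin M → ℝ)
    (c d : Fin M → ℝ) (S : Finset (Fin J)) (j₀ : Fin J) (hj : j₀ ∈ S)
    (h : ∀ z : Fin J → Bool,
      ∑ α, c α * ∏ j ∈ S, F j (z j) α = ∑ α, d α * ∏ j ∈ S, G j (z j) α)
    (φ : Bool → ℝ) :
    ∀ z : Fin J → Bool,
      ∑ α, (c α * (φ true * F j₀ true α + φ false * F j₀ false α)) *
          ∏ j ∈ S.erase j₀, F j (z j) α
      = ∑ α, (d α * (φ true * G j₀ true α + φ false * G j₀ false α)) *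
          ∏ j ∈ S.erase j₀, G j (z j) α := by
  intro z
  have key : ∀ (H : Fin J → Bool → Fin M → ℝ) (α : Fin M) (b : Bool),
      ∏ j ∈ S, H j (Function.update z j₀ b j) α
        = H j₀ b α * ∏ j ∈ S.erase j₀, H j (z j) α := by
    intro H α b
    rw [← Finset.mul_prod_erase S _ hj, Function.update_self]
    congr 1
    refine Finset.prod_congr rfl fun j hjmem => ?_
    rw [Function.update_of_ne (Finset.ne_of_mem_erase hjmem)]
  have expand : ∀ (H : Fin J → Bool → Fin M → ℝ) (e : Fin M → ℝ),
      ∑ α, (e α * (φ true * H j₀ true α + φ false * H j₀ false α)) *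
          ∏ j ∈ S.erase j₀, H j (z j) α
      = φ true * ∑ α, e α * ∏ j ∈ S, H j (Function.update z j₀ true j) α
        + φ false * ∑ α, e α * ∏ j ∈ S, H j (Function.update z j₀ false j) α := by
    intro H e
    simp only [key H]
    rw [Finset.mul_sum, Finset.mul_sum, ← Finset.sum_add_distrib]
    exact Finset.sum_congr rfl fun α _ => by ring
  rw [expand F c, expand G d, h (Function.update z j₀ true), h (Function.update z j₀ false)]

private lemma lcm_contract_block {J M : ℕ} (F G : Fin J → Bool → Fin M → ℝ)
    (c d : Fin M → ℝ) (S : Finset (Fin J))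
    (h : ∀ z : Fin J → Bool,
      ∑ α, c α * ∏ j ∈ S, F j (z j) α = ∑ α, d α * ∏ j ∈ S, G j (z j) α)
    (w : Fin J → Bool → ℝ) :
    ∀ T ⊆ S, ∀ z : Fin J → Bool,
      ∑ α, (c α * ∏ j ∈ T, (w j true * F j true α + w j false * F j false α)) *
          ∏ j ∈ S \ T, F j (z j) α
      = ∑ α, (d α * ∏ j ∈ T, (w j true * G j true α + w j false * G j false α)) *
          ∏ j ∈ S \ T, G j (z j) α := by
  intro T
  induction T using Finset.induction_on with
  | empty =>
      intro _ z
      simpa using h z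
  | @insert x T hx ih =>
      intro hsub z
      have hTS : T ⊆ S := (Finset.subset_insert x T).trans hsub
      have hxS : x ∈ S := hsub (Finset.mem_insert_self x T)
      have hxST : x ∈ S \ T := Finset.mem_sdiff.mpr ⟨hxS, hx⟩
      have H := lcm_contract_one F G
        (fun α => c α * ∏ j ∈ T, (w j true * F j true α + w j false * F j false α))
        (fun α => d α * ∏ j ∈ T, (w j true * G j true α + w j false * G j false α))
        (S \ T) x hxST (ih hTS) (w x) z
      have hrw : (S \ T).erase x = S \ insert x T := by
        ext y
        simp only [Finset.mem_erase, Finset.mem_sdiff, Finset.mem_insert]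
        tauto
      rw [hrw] at H
      calc ∑ α, (c α * ∏ j ∈ insert x T, (w j true * F j true α + w j false * F j false α)) *
            ∏ j ∈ S \ insert x T, F j (z j) α
          = ∑ α, ((c α * ∏ j ∈ T, (w j true * F j true α + w j false * F j false α)) *
              (w x true * F x true α + w x false * F x false α)) *
            ∏ j ∈ S \ insert x T, F j (z j) α := by
            refine Finset.sum_congr rfl fun α _ => ?_
            rw [Finset.prod_insert hx]; ring
        _ = ∑ α, ((d α * ∏ j ∈ T, (w j true * G j true α + w j false * G j false α)) *
              (w x true * G x true α + w x false * G x false α)) *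
            ∏ j ∈ S \ insert x T, G j (z j) α := H
        _ = _ := by
            refine Finset.sum_congr rfl fun α _ => ?_
            rw [Finset.prod_insert hx]; ring

private lemma lcm_rank_one_support {M : ℕ} (A B : Matrix (Fin M) (Fin M) ℝ)
    (hA : A.det ≠ 0) (hB : B.det ≠ 0) (d : Fin M → ℝ) (δ0 : Fin M) (c : ℝ) (hc : c ≠ 0)
    (h : A * Matrix.diagonal d * B = Matrix.of fun i j => if i = δ0 ∧ j = δ0 then c else 0)
    (hsum : ∑ α, d α = c) :
    ∃ α₀ : Fin M, (∀ α, α ≠ α₀ → d α = 0) ∧ d α₀ = c := by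
  have hAu : IsUnit A.det := hA.isUnit
  have hBu : IsUnit B.det := hB.isUnit
  have hD : Matrix.diagonal d = A⁻¹ * (A * Matrix.diagonal d * B) * B⁻¹ := by
    calc Matrix.diagonal d
        = (A⁻¹ * A) * Matrix.diagonal d * (B * B⁻¹) := by
          rw [Matrix.nonsing_inv_mul A hAu, Matrix.mul_nonsing_inv B hBu,
            Matrix.one_mul, Matrix.mul_one]
      _ = A⁻¹ * (A * Matrix.diagonal d * B) * B⁻¹ := by
          simp only [Matrix.mul_assoc]
  rw [h] at hD
  have hdiag : ∀ i j : Fin M, Matrix.diagonal d i j = A⁻¹ i δ0 * c * B⁻¹ δ0 j := by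
    intro i j
    rw [hD]
    rw [Matrix.mul_apply]
    have h1 : ∀ k : Fin M,
        (A⁻¹ * (Matrix.of fun i j => if i = δ0 ∧ j = δ0 then c else 0)) i k
          = if k = δ0 then A⁻¹ i δ0 * c else 0 := by
      intro k
      by_cases hk : k = δ0
      · simp [Matrix.mul_apply, Matrix.of_apply, hk]
      · simp [Matrix.mul_apply, Matrix.of_apply, hk]
    simp only [h1, ite_mul, zero_mul]
    rw [Finset.sum_eq_single δ0]
    · simp
    · intro b _ hb; simp [hb]
    · simp
  have hexists : ∃ α₀, d α₀ ≠ 0 := by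
    by_contra hcon
    push_neg at hcon
    rw [Finset.sum_congr rfl fun α _ => hcon α] at hsum
    simp at hsum
    exact hc hsum.symm
  obtain ⟨α₀, hα₀⟩ := hexists
  have hd0 : d α₀ = A⁻¹ α₀ δ0 * c * B⁻¹ δ0 α₀ := by
    have := hdiag α₀ α₀; rwa [Matrix.diagonal_apply_eq] at this
  have hu : A⁻¹ α₀ δ0 ≠ 0 := by
    intro h0; rw [hd0, h0] at hα₀; simp at hα₀
  have hzero : ∀ α, α ≠ α₀ → d α = 0 := by
    intro α hα
    have hoff : (0:ℝ) = A⁻¹ α₀ δ0 * c * B⁻¹ δ0 α := by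
      have := hdiag α₀ α
      rwa [Matrix.diagonal_apply_ne d (Ne.symm hα)] at this
    have hv : B⁻¹ δ0 α = 0 := by
      rcases mul_eq_zero.mp hoff.symm with h' | h'
      · rcases mul_eq_zero.mp h' with h'' | h''
        · exact absurd h'' hu
        · exact absurd h'' hc
      · exact h'
    have := hdiag α α
    rw [Matrix.diagonal_apply_eq, hv] at this
    simpa using this
  refine ⟨α₀, hzero, ?_⟩
  have hsum2 : ∑ α, d α = d α₀ := by
    rw [Finset.sum_eq_single α₀]
    · intro b _ hb; exact hzero b hb
    · simp
  rw [← hsum2, hsum]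

/-- **Identifiability of the binary latent class model with two-valued items
(Theorem 1).**
There are `M > 2` latent classes and `J` binary items, with conditional positive
response probabilities `p j α = P(Y^j = 1 | α)` and class proportions `π`.
Assume:
(A1) there are three pairwise disjoint subsets `I 0, I 1, I 2` of the items such that
for any two distinct classes the conditional joint distributions of the responses on
each subset differ;
(A2) for each item `j` in the union of the three subsets, `p j ·` takes exactly two
distinct values;
(A3) `π α > 0` for every class.
Then the item response probabilities (for all items) and the class proportions are
identifiable up to a permutation of the class labels. -/
theorem latent_class_binary_identifiability
    (M J : ℕ) (hM : M > 2)
    (p : Fin J → Fin M → ℝ) (π : Fin M → ℝ)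
    (hp : ∀ j α, 0 ≤ p j α ∧ p j α ≤ 1)
    (hπ0 : ∀ α, 0 ≤ π α) (hπ1 : ∑ α, π α = 1)
    (I : Fin 3 → Finset (Fin J))
    (hdisj : ∀ l l' : Fin 3, l ≠ l' → Disjoint (I l) (I l'))
    (hA1 : ∀ l : Fin 3, ∀ α₁ α₂ : Fin M, α₁ ≠ α₂ →
      ∃ y : Fin J → Bool,
        (∏ j ∈ I l, (if y j then p j α₁ else 1 - p j α₁)) ≠
        (∏ j ∈ I l, (if y j then p j α₂ else 1 - p j α₂)))
    (hA2 : ∀ j ∈ I 0 ∪ I 1 ∪ I 2, (Set.range (p j)).ncard = 2)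
    (hA3 : ∀ α, 0 < π α) :
    ∀ (p' : Fin J → Fin M → ℝ) (π' : Fin M → ℝ),
      (∀ j α, 0 ≤ p' j α ∧ p' j α ≤ 1) →
      (∀ α, 0 ≤ π' α) → (∑ α, π' α = 1) →
      (∀ y : Fin J → Bool,
        ∑ α, π α * ∏ j, (if y j then p j α else 1 - p j α) =
        ∑ α, π' α * ∏ j, (if y j then p' j α else 1 - p' j α)) →
      ∃ σ : Equiv.Perm (Fin M),
        (∀ j α, p' j (σ α) = p j α) ∧ (∀ α, π' (σ α) = π α) := by
  intro p' π' hp' hπ'0 hπ'1 hQ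
  classical
  have ifT : ∀ x y : ℝ, (if (true : Bool) then x else y) = x := fun _ _ => rfl
  have ifF : ∀ x y : ℝ, (if (false : Bool) then x else y) = y := fun _ _ => rfl
  -- choose the two values of each item in the union
  have h2 : ∀ j : Fin J, ∃ ab : ℝ × ℝ,
      j ∈ I 0 ∪ I 1 ∪ I 2 → ab.1 ≠ ab.2 ∧ Set.range (p j) = {ab.1, ab.2} := by
    intro j
    by_cases hj : j ∈ I 0 ∪ I 1 ∪ I 2
    · obtain ⟨a, b, hne, hr⟩ := Set.ncard_eq_two.mp (hA2 j hj)
      exact ⟨(a, b), fun _ => ⟨hne, hr⟩⟩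
    · exact ⟨(0, 1), fun h => absurd h hj⟩
  choose ab hab using h2
  set oth : Fin J → Fin M → ℝ :=
    fun j β => if p j β = (ab j).1 then (ab j).2 else (ab j).1 with hothdef
  set φ : Fin J → Fin M → Bool → ℝ :=
    fun j β bb => (if bb then 1 - oth j β else - oth j β) / (p j β - oth j β) with hφdef
  have hsub0 : I 0 ⊆ I 0 ∪ I 1 ∪ I 2 :=
    fun x hx => Finset.mem_union_left _ (Finset.mem_union_left _ hx)
  have hsub1 : I 1 ⊆ I 0 ∪ I 1 ∪ I 2 :=
    fun x hx => Finset.mem_union_left _ (Finset.mem_union_right _ hx)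
  have hsub2 : I 2 ⊆ I 0 ∪ I 1 ∪ I 2 := fun x hx => Finset.mem_union_right _ hx
  have hrange : ∀ j ∈ I 0 ∪ I 1 ∪ I 2, ∀ γ, p j γ = (ab j).1 ∨ p j γ = (ab j).2 := by
    intro j hj γ
    have h1 : p j γ ∈ Set.range (p j) := Set.mem_range_self γ
    rw [(hab j hj).2] at h1
    simpa using h1
  -- the dual functional computation
  have key1 : ∀ j ∈ I 0 ∪ I 1 ∪ I 2, ∀ α β : Fin M,
      φ j β true * p j α + φ j β false * (1 - p j α)
        = if p j α = p j β then 1 else 0 := by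
    intro j hj α β
    have hne := (hab j hj).1
    have hts : p j β - oth j β ≠ 0 := by
      rw [hothdef]; simp only
      by_cases hc : p j β = (ab j).1
      · rw [if_pos hc, hc]; exact sub_ne_zero.mpr hne
      · rw [if_neg hc, (hrange j hj β).resolve_left hc]
        exact sub_ne_zero.mpr (Ne.symm hne)
    have hαcase : p j α = p j β ∨ p j α = oth j β := by
      rw [hothdef]; simp only
      by_cases hc : p j β = (ab j).1
      · rw [if_pos hc]
        rcases hrange j hj α with h | h
        · left; rw [h, hc]
        · right; exact h
      · rw [if_neg hc]
        have hβ : p j β = (ab j).2 := (hrange j hj β).resolve_left hc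
        rcases hrange j hj α with h | h
        · right; exact h
        · left; rw [h, hβ]
    rw [hφdef]; simp only [ifT, ifF]
    rcases hαcase with h | h
    · rw [if_pos h, h]
      field_simp
      rw [if_pos trivial]
      ring
    · have hne2 : p j α ≠ p j β := by
        rw [h]; intro hcontra
        exact hts (by rw [← hcontra]; ring)
      rw [if_neg hne2, h]
      field_simp
      rw [if_pos trivial]
      ring
  have chiProd : ∀ l : Fin 3, ∀ α β : Fin M,
      ∏ j ∈ I l, (if p j α = p j β then (1:ℝ) else 0) = if α = β then 1 else 0 := by
    intro l α β
    by_cases hαβ : α = β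
    · simp [hαβ]
    · rw [if_neg hαβ]
      obtain ⟨y, hy⟩ := hA1 l α β hαβ
      have hex : ∃ j ∈ I l, p j α ≠ p j β := by
        by_contra hcon
        push_neg at hcon
        exact hy (Finset.prod_congr rfl fun j hj => by rw [hcon j hj])
      obtain ⟨j, hj, hnej⟩ := hex
      exact Finset.prod_eq_zero hj (if_neg hnej)
  -- the contracted block matrices (for the alternative parameters)
  set Bl : Fin 3 → Fin M → Fin M → ℝ :=
    fun l α β => ∏ j ∈ I l, (φ j β true * p' j α + φ j β false * (1 - p' j α)) with hBldef
  -- master contraction identity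
  have MASTER : ∀ o : Fin 3 → Option (Fin M), ∀ T : Finset (Fin J),
      (∀ l : Fin 3, ∀ β : Fin M, o l = some β → I l ⊆ T) →
      ∀ z : Fin J → Bool,
        ∑ α, π α * ((o 0).elim 1 fun β => if α = β then (1:ℝ) else 0)
              * ((o 1).elim 1 fun β => if α = β then (1:ℝ) else 0)
              * ((o 2).elim 1 fun β => if α = β then (1:ℝ) else 0)
              * ∏ j ∈ Finset.univ \ T, (if z j then p j α else 1 - p j α)
        = ∑ α, π' α * ((o 0).elim 1 fun β => Bl 0 α β)
              * ((o 1).elim 1 fun β => Bl 1 α β)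
              * ((o 2).elim 1 fun β => Bl 2 α β)
              * ∏ j ∈ Finset.univ \ T, (if z j then p' j α else 1 - p' j α) := by
    intro o T hT z
    set w : Fin J → Bool → ℝ := fun j bb =>
      if j ∈ I 0 then (o 0).elim 1 (fun β => φ j β bb)
      else if j ∈ I 1 then (o 1).elim 1 (fun β => φ j β bb)
      else if j ∈ I 2 then (o 2).elim 1 (fun β => φ j β bb)
      else 1 with hwdef
    have H := lcm_contract_block (fun j bb α => if bb then p j α else 1 - p j α)
      (fun j bb α => if bb then p' j α else 1 - p' j α) π π' Finset.univ hQ w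
      T (Finset.subset_univ T) z
    simp only [ifT, ifF, if_true] at H
    -- the active sets
    set A0 : Finset (Fin J) := (o 0).elim ∅ (fun _ => I 0) with hA0def
    set A1 : Finset (Fin J) := (o 1).elim ∅ (fun _ => I 1) with hA1def
    set A2 : Finset (Fin J) := (o 2).elim ∅ (fun _ => I 2) with hA2def
    have hA0I : A0 ⊆ I 0 := by
      rw [hA0def]; cases o 0 <;> simp
    have hA1I : A1 ⊆ I 1 := by
      rw [hA1def]; cases o 1 <;> simp
    have hA2I : A2 ⊆ I 2 := by
      rw [hA2def]; cases o 2 <;> simp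
    have hA0T : A0 ⊆ T := by
      rw [hA0def]; cases ho : o 0 with
      | none => simp
      | some β => simpa using hT 0 β ho
    have hA1T : A1 ⊆ T := by
      rw [hA1def]; cases ho : o 1 with
      | none => simp
      | some β => simpa using hT 1 β ho
    have hA2T : A2 ⊆ T := by
      rw [hA2def]; cases ho : o 2 with
      | none => simp
      | some β => simpa using hT 2 β ho
    have hAU : A0 ∪ A1 ∪ A2 ⊆ T := by
      intro x hx
      rcases Finset.mem_union.mp hx with hx | hx
      · rcases Finset.mem_union.mp hx with hx | hx
        · exact hA0T hx
        · exact hA1T hx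
      · exact hA2T hx
    have hd01 : Disjoint A0 A1 :=
      Finset.disjoint_of_subset_left hA0I (Finset.disjoint_of_subset_right hA1I
        (hdisj 0 1 (by decide)))
    have hd012 : Disjoint (A0 ∪ A1) A2 := by
      refine Finset.disjoint_union_left.mpr ⟨?_, ?_⟩
      · exact Finset.disjoint_of_subset_left hA0I (Finset.disjoint_of_subset_right hA2I
          (hdisj 0 2 (by decide)))
      · exact Finset.disjoint_of_subset_left hA1I (Finset.disjoint_of_subset_right hA2I
          (hdisj 1 2 (by decide)))
    -- off the active sets, the weights are trivial
    have hw_one : ∀ j, j ∉ A0 ∪ A1 ∪ A2 → ∀ bb, w j bb = 1 := by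
      intro j hjA bb
      have hj0 : j ∈ I 0 → o 0 = none := by
        intro hj
        cases ho : o 0 with
        | none => rfl
        | some β =>
            exfalso
            apply hjA
            refine Finset.mem_union_left _ (Finset.mem_union_left _ ?_)
            rw [hA0def, ho]; simpa using hj
      have hj1 : j ∈ I 1 → o 1 = none := by
        intro hj
        cases ho : o 1 with
        | none => rfl
        | some β =>
            exfalso
            apply hjA
            refine Finset.mem_union_left _ (Finset.mem_union_right _ ?_)
            rw [hA1def, ho]; simpa using hj
      have hj2 : j ∈ I 2 → o 2 = none := by
        intro hj
        cases ho : o 2 with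
        | none => rfl
        | some β =>
            exfalso
            apply hjA
            refine Finset.mem_union_right _ ?_
            rw [hA2def, ho]; simpa using hj
      rw [hwdef]; simp only
      by_cases h0 : j ∈ I 0
      · rw [if_pos h0, hj0 h0]; rfl
      · rw [if_neg h0]
        by_cases h1 : j ∈ I 1
        · rw [if_pos h1, hj1 h1]; rfl
        · rw [if_neg h1]
          by_cases hh2 : j ∈ I 2
          · rw [if_pos hh2, hj2 hh2]; rfl
          · rw [if_neg hh2]
    -- weights on the active blocks
    have hw0 : ∀ β : Fin M, o 0 = some β → ∀ j ∈ I 0, ∀ bb, w j bb = φ j β bb := by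
      intro β ho j hj bb
      rw [hwdef]; simp only
      rw [if_pos hj, ho]
      rfl
    have hw1 : ∀ β : Fin M, o 1 = some β → ∀ j ∈ I 1, ∀ bb, w j bb = φ j β bb := by
      intro β ho j hj bb
      have hj0 : j ∉ I 0 := Finset.disjoint_left.mp (hdisj 1 0 (by decide)) hj
      rw [hwdef]; simp only
      rw [if_neg hj0, if_pos hj, ho]
      rfl
    have hw2 : ∀ β : Fin M, o 2 = some β → ∀ j ∈ I 2, ∀ bb, w j bb = φ j β bb := by
      intro β ho j hj bb
      have hj0 : j ∉ I 0 := Finset.disjoint_left.mp (hdisj 2 0 (by decide)) hj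
      have hj1 : j ∉ I 1 := Finset.disjoint_left.mp (hdisj 2 1 (by decide)) hj
      rw [hwdef]; simp only
      rw [if_neg hj0, if_neg hj1, if_pos hj, ho]
      rfl
    -- splitting the coefficient product
    have hcoeff : ∀ q : Fin J → Fin M → ℝ, ∀ α : Fin M,
        ∏ j ∈ T, (w j true * q j α + w j false * (1 - q j α))
        = (∏ j ∈ A0, (w j true * q j α + w j false * (1 - q j α)))
          * (∏ j ∈ A1, (w j true * q j α + w j false * (1 - q j α)))
          * (∏ j ∈ A2, (w j true * q j α + w j false * (1 - q j α))) := by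
      intro q α
      have hv : ∀ x ∈ T, x ∉ A0 ∪ A1 ∪ A2 →
          w x true * q x α + w x false * (1 - q x α) = 1 := by
        intro x _ hxA
        rw [hw_one x hxA true, hw_one x hxA false]; ring
      rw [← Finset.prod_subset hAU hv, Finset.prod_union hd012, Finset.prod_union hd01]
    -- block evaluation, unprimed side
    have hblock0 : ∀ α : Fin M,
        ∏ j ∈ A0, (w j true * p j α + w j false * (1 - p j α))
          = (o 0).elim 1 fun β => if α = β then (1:ℝ) else 0 := by
      intro α
      cases ho : o 0 with
      | none => rw [hA0def, ho]; simp
      | some β =>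
          have hA : A0 = I 0 := by rw [hA0def, ho]; rfl
          have he : ((some β).elim 1 fun β' => if α = β' then (1:ℝ) else 0)
              = (if α = β then (1:ℝ) else 0) := rfl
          rw [hA, he, ← chiProd 0 α β]
          refine Finset.prod_congr rfl fun j hj => ?_
          rw [hw0 β ho j hj true, hw0 β ho j hj false, key1 j (hsub0 hj) α β]
    have hblock1 : ∀ α : Fin M,
        ∏ j ∈ A1, (w j true * p j α + w j false * (1 - p j α))
          = (o 1).elim 1 fun β => if α = β then (1:ℝ) else 0 := by
      intro α
      cases ho : o 1 with
      | none => rw [hA1def, ho]; simp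
      | some β =>
          have hA : A1 = I 1 := by rw [hA1def, ho]; rfl
          have he : ((some β).elim 1 fun β' => if α = β' then (1:ℝ) else 0)
              = (if α = β then (1:ℝ) else 0) := rfl
          rw [hA, he, ← chiProd 1 α β]
          refine Finset.prod_congr rfl fun j hj => ?_
          rw [hw1 β ho j hj true, hw1 β ho j hj false, key1 j (hsub1 hj) α β]
    have hblock2 : ∀ α : Fin M,
        ∏ j ∈ A2, (w j true * p j α + w j false * (1 - p j α))
          = (o 2).elim 1 fun β => if α = β then (1:ℝ) else 0 := by
      intro α
      cases ho : o 2 with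
      | none => rw [hA2def, ho]; simp
      | some β =>
          have hA : A2 = I 2 := by rw [hA2def, ho]; rfl
          have he : ((some β).elim 1 fun β' => if α = β' then (1:ℝ) else 0)
              = (if α = β then (1:ℝ) else 0) := rfl
          rw [hA, he, ← chiProd 2 α β]
          refine Finset.prod_congr rfl fun j hj => ?_
          rw [hw2 β ho j hj true, hw2 β ho j hj false, key1 j (hsub2 hj) α β]
    -- block evaluation, primed side
    have hblock0' : ∀ α : Fin M,
        ∏ j ∈ A0, (w j true * p' j α + w j false * (1 - p' j α))
          = (o 0).elim 1 fun β => Bl 0 α β := by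
      intro α
      cases ho : o 0 with
      | none => rw [hA0def, ho]; simp
      | some β =>
          have hA : A0 = I 0 := by rw [hA0def, ho]; rfl
          have he : ((some β).elim 1 fun β' => Bl 0 α β') = Bl 0 α β := rfl
          rw [hA, he, hBldef]
          refine Finset.prod_congr rfl fun j hj => ?_
          rw [hw0 β ho j hj true, hw0 β ho j hj false]
    have hblock1' : ∀ α : Fin M,
        ∏ j ∈ A1, (w j true * p' j α + w j false * (1 - p' j α))
          = (o 1).elim 1 fun β => Bl 1 α β := by
      intro α
      cases ho : o 1 with
      | none => rw [hA1def, ho]; simp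
      | some β =>
          have hA : A1 = I 1 := by rw [hA1def, ho]; rfl
          have he : ((some β).elim 1 fun β' => Bl 1 α β') = Bl 1 α β := rfl
          rw [hA, he, hBldef]
          refine Finset.prod_congr rfl fun j hj => ?_
          rw [hw1 β ho j hj true, hw1 β ho j hj false]
    have hblock2' : ∀ α : Fin M,
        ∏ j ∈ A2, (w j true * p' j α + w j false * (1 - p' j α))
          = (o 2).elim 1 fun β => Bl 2 α β := by
      intro α
      cases ho : o 2 with
      | none => rw [hA2def, ho]; simp
      | some β =>
          have hA : A2 = I 2 := by rw [hA2def, ho]; rfl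
          have he : ((some β).elim 1 fun β' => Bl 2 α β') = Bl 2 α β := rfl
          rw [hA, he, hBldef]
          refine Finset.prod_congr rfl fun j hj => ?_
          rw [hw2 β ho j hj true, hw2 β ho j hj false]
    refine Eq.trans (Finset.sum_congr rfl fun α _ => ?_)
      (H.trans (Finset.sum_congr rfl fun α _ => ?_))
    · rw [hcoeff p α, hblock0 α, hblock1 α, hblock2 α]
      ring
    · rw [hcoeff p' α, hblock0' α, hblock1' α, hblock2' α]
      ring
  -- the basic identities
  have E3 : ∀ β γ δ0 : Fin M,
      ∑ α, π' α * Bl 0 α β * Bl 1 α γ * Bl 2 α δ0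
        = if β = γ ∧ γ = δ0 then π β else 0 := by
    intro β γ δ0
    have H := MASTER ![some β, some γ, some δ0] Finset.univ
      (fun l β' _ => Finset.subset_univ _) (fun _ => true)
    rw [Finset.sdiff_self] at H
    simp only [Finset.prod_empty, mul_one] at H
    have H' : ∑ α, π α * (if α = β then (1:ℝ) else 0) * (if α = γ then (1:ℝ) else 0)
        * (if α = δ0 then (1:ℝ) else 0)
        = ∑ α, π' α * Bl 0 α β * Bl 1 α γ * Bl 2 α δ0 := H
    rw [← H']
    rw [Finset.sum_eq_single β (fun b _ hb => by simp [hb])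
      (fun h => absurd (Finset.mem_univ β) h)]
    by_cases h1 : β = γ
    · subst h1
      by_cases h2 : β = δ0
      · subst h2; simp
      · simp [h2]
    · simp [h1]
  have E2ab : ∀ β γ : Fin M,
      ∑ α, π' α * Bl 0 α β * Bl 1 α γ = if β = γ then π β else 0 := by
    intro β γ
    have H := MASTER ![some β, some γ, none] Finset.univ
      (fun l β' _ => Finset.subset_univ _) (fun _ => true)
    rw [Finset.sdiff_self] at H
    simp only [Finset.prod_empty, mul_one] at H
    have H' : ∑ α, π α * (if α = β then (1:ℝ) else 0) * (if α = γ then (1:ℝ) else 0) * 1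
        = ∑ α, π' α * Bl 0 α β * Bl 1 α γ * 1 := H
    simp only [mul_one] at H'
    rw [← H']
    rw [Finset.sum_eq_single β (fun b _ hb => by simp [hb])
      (fun h => absurd (Finset.mem_univ β) h)]
    by_cases h1 : β = γ
    · subst h1; simp
    · simp [h1]
  have E2ac : ∀ β γ : Fin M,
      ∑ α, π' α * Bl 0 α β * Bl 2 α γ = if β = γ then π β else 0 := by
    intro β γ
    have H := MASTER ![some β, none, some γ] Finset.univ
      (fun l β' _ => Finset.subset_univ _) (fun _ => true)
    rw [Finset.sdiff_self] at H
    simp only [Finset.prod_empty, mul_one] at H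
    have H' : ∑ α, π α * (if α = β then (1:ℝ) else 0) * 1 * (if α = γ then (1:ℝ) else 0)
        = ∑ α, π' α * Bl 0 α β * 1 * Bl 2 α γ := H
    simp only [mul_one] at H'
    rw [← H']
    rw [Finset.sum_eq_single β (fun b _ hb => by simp [hb])
      (fun h => absurd (Finset.mem_univ β) h)]
    by_cases h1 : β = γ
    · subst h1; simp
    · simp [h1]
  have E2bc : ∀ β γ : Fin M,
      ∑ α, π' α * Bl 1 α β * Bl 2 α γ = if β = γ then π β else 0 := by
    intro β γ
    have H := MASTER ![none, some β, some γ] Finset.univ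
      (fun l β' _ => Finset.subset_univ _) (fun _ => true)
    rw [Finset.sdiff_self] at H
    simp only [Finset.prod_empty, mul_one] at H
    have H' : ∑ α, π α * 1 * (if α = β then (1:ℝ) else 0) * (if α = γ then (1:ℝ) else 0)
        = ∑ α, π' α * 1 * Bl 1 α β * Bl 2 α γ := H
    simp only [mul_one] at H'
    rw [← H']
    rw [Finset.sum_eq_single β (fun b _ hb => by simp [hb])
      (fun h => absurd (Finset.mem_univ β) h)]
    by_cases h1 : β = γ
    · subst h1; simp
    · simp [h1]
  have E1a : ∀ β : Fin M, ∑ α, π' α * Bl 0 α β = π β := by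
    intro β
    have H := MASTER ![some β, none, none] Finset.univ
      (fun l β' _ => Finset.subset_univ _) (fun _ => true)
    rw [Finset.sdiff_self] at H
    simp only [Finset.prod_empty, mul_one] at H
    have H' : ∑ α, π α * (if α = β then (1:ℝ) else 0) * 1 * 1
        = ∑ α, π' α * Bl 0 α β * 1 * 1 := H
    simp only [mul_one] at H'
    rw [← H']
    rw [Finset.sum_eq_single β (fun b _ hb => by simp [hb])
      (fun h => absurd (Finset.mem_univ β) h)]
    simp
  have E1b : ∀ β : Fin M, ∑ α, π' α * Bl 1 α β = π β := by
    intro β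
    have H := MASTER ![none, some β, none] Finset.univ
      (fun l β' _ => Finset.subset_univ _) (fun _ => true)
    rw [Finset.sdiff_self] at H
    simp only [Finset.prod_empty, mul_one] at H
    have H' : ∑ α, π α * 1 * (if α = β then (1:ℝ) else 0) * 1
        = ∑ α, π' α * 1 * Bl 1 α β * 1 := H
    simp only [mul_one, one_mul] at H'
    rw [← H']
    rw [Finset.sum_eq_single β (fun b _ hb => by simp [hb])
      (fun h => absurd (Finset.mem_univ β) h)]
    simp
  have E1c : ∀ β : Fin M, ∑ α, π' α * Bl 2 α β = π β := by
    intro β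
    have H := MASTER ![none, none, some β] Finset.univ
      (fun l β' _ => Finset.subset_univ _) (fun _ => true)
    rw [Finset.sdiff_self] at H
    simp only [Finset.prod_empty, mul_one] at H
    have H' : ∑ α, π α * 1 * 1 * (if α = β then (1:ℝ) else 0)
        = ∑ α, π' α * 1 * 1 * Bl 2 α β := H
    simp only [mul_one, one_mul] at H'
    rw [← H']
    rw [Finset.sum_eq_single β (fun b _ hb => by simp [hb])
      (fun h => absurd (Finset.mem_univ β) h)]
    simp
  -- matrix form and invertibility
  have hπne : ∀ α, π α ≠ 0 := fun α => (hA3 α).ne'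
  have hABD : ∀ (X Y : Fin M → Fin M → ℝ) (dv : Fin M → ℝ),
      (Matrix.of X)ᵀ * Matrix.diagonal dv * Matrix.of Y
        = Matrix.of fun β γ => ∑ α, dv α * X α β * Y α γ := by
    intro X Y dv
    ext β γ
    rw [Matrix.mul_apply]
    simp only [Matrix.mul_diagonal, Matrix.transpose_apply, Matrix.of_apply]
    exact Finset.sum_congr rfl fun α _ => by ring
  have hM1 : (Matrix.of fun α β => Bl 0 α β)ᵀ * Matrix.diagonal π'
      * (Matrix.of fun α β => Bl 1 α β) = Matrix.diagonal π := by
    rw [hABD]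
    ext β γ
    simp only [Matrix.of_apply, Matrix.diagonal_apply]
    exact E2ab β γ
  have hM2 : (Matrix.of fun α β => Bl 1 α β)ᵀ * Matrix.diagonal π'
      * (Matrix.of fun α β => Bl 2 α β) = Matrix.diagonal π := by
    rw [hABD]
    ext β γ
    simp only [Matrix.of_apply, Matrix.diagonal_apply]
    exact E2bc β γ
  have hdetπ : (Matrix.diagonal π).det ≠ 0 := by
    rw [Matrix.det_diagonal]
    exact Finset.prod_ne_zero_iff.mpr fun α _ => hπne α
  have hd1 : (Matrix.of fun α β => Bl 0 α β).det * (Matrix.diagonal π').det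
      * (Matrix.of fun α β => Bl 1 α β).det ≠ 0 := by
    have h := congrArg Matrix.det hM1
    rw [Matrix.det_mul, Matrix.det_mul, Matrix.det_transpose] at h
    rw [h]
    exact hdetπ
  have hdetS : (Matrix.of fun α β => Bl 0 α β).det ≠ 0 :=
    fun h0 => hd1 (by rw [h0]; ring)
  have hdetT : (Matrix.of fun α β => Bl 1 α β).det ≠ 0 :=
    fun h0 => hd1 (by rw [h0]; ring)
  have hdetD : (Matrix.diagonal π').det ≠ 0 :=
    fun h0 => hd1 (by rw [h0]; ring)
  have hd2 : (Matrix.of fun α β => Bl 1 α β).det * (Matrix.diagonal π').det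
      * (Matrix.of fun α β => Bl 2 α β).det ≠ 0 := by
    have h := congrArg Matrix.det hM2
    rw [Matrix.det_mul, Matrix.det_mul, Matrix.det_transpose] at h
    rw [h]
    exact hdetπ
  have hdetR : (Matrix.of fun α β => Bl 2 α β).det ≠ 0 :=
    fun h0 => hd2 (by rw [h0]; ring)
  have hπ'ne : ∀ α, π' α ≠ 0 := by
    intro α h0
    rw [Matrix.det_diagonal] at hdetD
    exact hdetD (Finset.prod_eq_zero (Finset.mem_univ α) h0)
  have hdetSt : ((Matrix.of fun α β => Bl 0 α β)ᵀ).det ≠ 0 := by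
    rw [Matrix.det_transpose]; exact hdetS
  have hdetTt : ((Matrix.of fun α β => Bl 1 α β)ᵀ).det ≠ 0 := by
    rw [Matrix.det_transpose]; exact hdetT
  -- concentration of each block matrix column
  have keyS : ∀ β : Fin M, ∃ α₀,
      (∀ α, α ≠ α₀ → Bl 0 α β = 0) ∧ π' α₀ * Bl 0 α₀ β = π β := by
    intro β
    have hmat : (Matrix.of fun α γ => Bl 1 α γ)ᵀ
        * Matrix.diagonal (fun α => π' α * Bl 0 α β)
        * (Matrix.of fun α δ0 => Bl 2 α δ0)
        = Matrix.of fun γ δ0 => if γ = β ∧ δ0 = β then π β else 0 := by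
      rw [hABD]
      ext γ δ0
      simp only [Matrix.of_apply]
      rw [show ∑ α, (π' α * Bl 0 α β) * Bl 1 α γ * Bl 2 α δ0
          = ∑ α, π' α * Bl 0 α β * Bl 1 α γ * Bl 2 α δ0 from
        Finset.sum_congr rfl fun α _ => by ring, E3 β γ δ0]
      have hcond : (β = γ ∧ γ = δ0) ↔ (γ = β ∧ δ0 = β) := by
        constructor
        · rintro ⟨rfl, rfl⟩; exact ⟨rfl, rfl⟩
        · rintro ⟨rfl, rfl⟩; exact ⟨rfl, rfl⟩
      rw [if_congr hcond rfl rfl]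
    obtain ⟨α₀, hz, he⟩ := lcm_rank_one_support _ _ hdetTt hdetR
      (fun α => π' α * Bl 0 α β) β (π β) (hπne β) hmat (E1a β)
    exact ⟨α₀, fun α hα => (mul_eq_zero.mp (hz α hα)).resolve_left (hπ'ne α), he⟩
  have keyT : ∀ γ : Fin M, ∃ α₀,
      (∀ α, α ≠ α₀ → Bl 1 α γ = 0) ∧ π' α₀ * Bl 1 α₀ γ = π γ := by
    intro γ
    have hmat : (Matrix.of fun α β => Bl 0 α β)ᵀ
        * Matrix.diagonal (fun α => π' α * Bl 1 α γ)
        * (Matrix.of fun α δ0 => Bl 2 α δ0)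
        = Matrix.of fun β δ0 => if β = γ ∧ δ0 = γ then π γ else 0 := by
      rw [hABD]
      ext β δ0
      simp only [Matrix.of_apply]
      rw [show ∑ α, (π' α * Bl 1 α γ) * Bl 0 α β * Bl 2 α δ0
          = ∑ α, π' α * Bl 0 α β * Bl 1 α γ * Bl 2 α δ0 from
        Finset.sum_congr rfl fun α _ => by ring, E3 β γ δ0]
      by_cases h1 : β = γ
      · subst h1
        by_cases h2 : β = δ0
        · subst h2; simp
        · have h3 : ¬((δ0 : Fin M) = β) := fun h => h2 h.symm
          simp [h2, h3]
      · simp [h1]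
    obtain ⟨α₀, hz, he⟩ := lcm_rank_one_support _ _ hdetSt hdetR
      (fun α => π' α * Bl 1 α γ) γ (π γ) (hπne γ) hmat (E1b γ)
    exact ⟨α₀, fun α hα => (mul_eq_zero.mp (hz α hα)).resolve_left (hπ'ne α), he⟩
  have keyR : ∀ δ0 : Fin M, ∃ α₀,
      (∀ α, α ≠ α₀ → Bl 2 α δ0 = 0) ∧ π' α₀ * Bl 2 α₀ δ0 = π δ0 := by
    intro δ0
    have hmat : (Matrix.of fun α β => Bl 0 α β)ᵀ
        * Matrix.diagonal (fun α => π' α * Bl 2 α δ0)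
        * (Matrix.of fun α γ => Bl 1 α γ)
        = Matrix.of fun β γ => if β = δ0 ∧ γ = δ0 then π δ0 else 0 := by
      rw [hABD]
      ext β γ
      simp only [Matrix.of_apply]
      rw [show ∑ α, (π' α * Bl 2 α δ0) * Bl 0 α β * Bl 1 α γ
          = ∑ α, π' α * Bl 0 α β * Bl 1 α γ * Bl 2 α δ0 from
        Finset.sum_congr rfl fun α _ => by ring, E3 β γ δ0]
      by_cases h1 : β = γ
      · subst h1
        by_cases h2 : β = δ0
        · subst h2; simp
        · simp [h2]
      · have h3 : ¬(β = δ0 ∧ γ = δ0) := fun h => h1 (h.1.trans h.2.symm)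
        simp [h1, h3]
    obtain ⟨α₀, hz, he⟩ := lcm_rank_one_support _ _ hdetSt hdetT
      (fun α => π' α * Bl 2 α δ0) δ0 (π δ0) (hπne δ0) hmat (E1c δ0)
    exact ⟨α₀, fun α hα => (mul_eq_zero.mp (hz α hα)).resolve_left (hπ'ne α), he⟩
  -- build the permutation
  choose σ0 hS0 hS1 using keyS
  have csum : ∀ (t : Fin M) (g : Fin M → ℝ), (∀ α, α ≠ t → g α = 0) → ∑ α, g α = g t := by
    intro t g hg
    rw [Finset.sum_eq_single t (fun b _ hb => hg b hb) (fun h => absurd (Finset.mem_univ _) h)]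
  have hTβ : ∀ β, Bl 1 (σ0 β) β = 1 := by
    intro β
    have h := E2ab β β
    rw [if_pos rfl] at h
    have h2 : ∑ α, π' α * Bl 0 α β * Bl 1 α β
        = π' (σ0 β) * Bl 0 (σ0 β) β * Bl 1 (σ0 β) β :=
      csum (σ0 β) _ (fun α hα => by rw [hS0 β α hα]; ring)
    rw [h2, hS1 β] at h
    exact mul_left_cancel₀ (hπne β) (by rw [h, mul_one])
  have keyT' : ∀ β, (∀ α, α ≠ σ0 β → Bl 1 α β = 0) ∧ π' (σ0 β) = π β := by
    intro β
    obtain ⟨α₁, hz, he⟩ := keyT β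
    have hσ : σ0 β = α₁ := by
      by_contra hne
      have h0 := hz (σ0 β) hne
      rw [hTβ β] at h0
      exact one_ne_zero h0
    refine ⟨fun α hα => hz α (hσ ▸ hα), ?_⟩
    have hb : Bl 1 α₁ β = 1 := by rw [← hσ]; exact hTβ β
    rw [hb, mul_one] at he
    rw [hσ]
    exact he
  have hπ'σ : ∀ β, π' (σ0 β) = π β := fun β => (keyT' β).2
  have hSβ : ∀ β, Bl 0 (σ0 β) β = 1 := by
    intro β
    have h := hS1 β
    rw [hπ'σ β] at h
    exact mul_left_cancel₀ (hπne β) (by rw [h, mul_one])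
  have keyR' : ∀ β, (∀ α, α ≠ σ0 β → Bl 2 α β = 0) ∧ Bl 2 (σ0 β) β = 1 := by
    intro β
    have h := E2ac β β
    rw [if_pos rfl] at h
    have h2 : ∑ α, π' α * Bl 0 α β * Bl 2 α β
        = π' (σ0 β) * Bl 0 (σ0 β) β * Bl 2 (σ0 β) β :=
      csum (σ0 β) _ (fun α hα => by rw [hS0 β α hα]; ring)
    rw [h2, hS1 β] at h
    have hb : Bl 2 (σ0 β) β = 1 := mul_left_cancel₀ (hπne β) (by rw [h, mul_one])
    obtain ⟨α₁, hz, he⟩ := keyR β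
    have hσ : σ0 β = α₁ := by
      by_contra hne
      have h0 := hz (σ0 β) hne
      rw [hb] at h0
      exact one_ne_zero h0
    exact ⟨fun α hα => hz α (hσ ▸ hα), hb⟩
  have hinj : Function.Injective σ0 := by
    intro β β' hbe
    by_contra hne
    have h := E2ab β β'
    rw [if_neg hne] at h
    have h2 : ∑ α, π' α * Bl 0 α β * Bl 1 α β'
        = π' (σ0 β) * Bl 0 (σ0 β) β * Bl 1 (σ0 β) β' :=
      csum (σ0 β) _ (fun α hα => by rw [hS0 β α hα]; ring)
    rw [h2, hS1 β] at h
    have hb : Bl 1 (σ0 β) β' = 1 := by rw [hbe]; exact hTβ β'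
    rw [hb, mul_one] at h
    exact hπne β h
  have huniv : ∀ j : Fin J, Finset.univ \ (Finset.univ.erase j) = {j} := by
    intro j
    ext x
    by_cases hx : x = j
    · simp [hx]
    · simp [Finset.mem_erase, Finset.mem_sdiff, hx]
  -- the itemwise conclusion
  have final : ∀ (j : Fin J) (β : Fin M), p' j (σ0 β) = p j β := by
    intro j β
    by_cases hj0 : j ∈ I 0
    · -- use blocks 1 and 2
      have hj1 : j ∉ I 1 := Finset.disjoint_left.mp (hdisj 0 1 (by decide)) hj0
      have hj2 : j ∉ I 2 := Finset.disjoint_left.mp (hdisj 0 2 (by decide)) hj0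
      have Hj := MASTER ![none, some β, some β] (Finset.univ.erase j)
        (by
          intro l β' hl
          fin_cases l
          · exact absurd hl (by simp)
          · intro x hx
            exact Finset.mem_erase.mpr ⟨fun he => hj1 (he ▸ hx), Finset.mem_univ x⟩
          · intro x hx
            exact Finset.mem_erase.mpr ⟨fun he => hj2 (he ▸ hx), Finset.mem_univ x⟩)
        (fun _ => true)
      rw [huniv j] at Hj
      simp only [Finset.prod_singleton, ifT] at Hj
      have H' : ∑ α, π α * 1 * (if α = β then (1:ℝ) else 0) * (if α = β then (1:ℝ) else 0)
            * p j α
          = ∑ α, π' α * 1 * Bl 1 α β * Bl 2 α β * p' j α := Hj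
      have hL : ∑ α, π α * 1 * (if α = β then (1:ℝ) else 0) * (if α = β then (1:ℝ) else 0)
          * p j α = π β * p j β := by
        rw [csum β _ (fun α hα => by simp [hα])]
        simp
      have hR : ∑ α, π' α * 1 * Bl 1 α β * Bl 2 α β * p' j α = π β * p' j (σ0 β) := by
        rw [csum (σ0 β) _ (fun α hα => by rw [(keyT' β).1 α hα]; ring)]
        rw [hTβ β, (keyR' β).2, hπ'σ β]
        ring
      rw [hL, hR] at H'
      exact (mul_left_cancel₀ (hπne β) H').symm
    · by_cases hj1 : j ∈ I 1
      · -- use blocks 0 and 2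
        have hj2 : j ∉ I 2 := Finset.disjoint_left.mp (hdisj 1 2 (by decide)) hj1
        have Hj := MASTER ![some β, none, some β] (Finset.univ.erase j)
          (by
            intro l β' hl
            fin_cases l
            · intro x hx
              exact Finset.mem_erase.mpr ⟨fun he => hj0 (he ▸ hx), Finset.mem_univ x⟩
            · exact absurd hl (by simp)
            · intro x hx
              exact Finset.mem_erase.mpr ⟨fun he => hj2 (he ▸ hx), Finset.mem_univ x⟩)
          (fun _ => true)
        rw [huniv j] at Hj
        simp only [Finset.prod_singleton, ifT] at Hj
        have H' : ∑ α, π α * (if α = β then (1:ℝ) else 0) * 1 * (if α = β then (1:ℝ) else 0)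
              * p j α
            = ∑ α, π' α * Bl 0 α β * 1 * Bl 2 α β * p' j α := Hj
        have hL : ∑ α, π α * (if α = β then (1:ℝ) else 0) * 1 * (if α = β then (1:ℝ) else 0)
            * p j α = π β * p j β := by
          rw [csum β _ (fun α hα => by simp [hα])]
          simp
        have hR : ∑ α, π' α * Bl 0 α β * 1 * Bl 2 α β * p' j α = π β * p' j (σ0 β) := by
          rw [csum (σ0 β) _ (fun α hα => by rw [hS0 β α hα]; ring)]
          rw [hSβ β, (keyR' β).2, hπ'σ β]
          ring
        rw [hL, hR] at H'
        exact (mul_left_cancel₀ (hπne β) H').symm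
      · -- use blocks 0 and 1
        have Hj := MASTER ![some β, some β, none] (Finset.univ.erase j)
          (by
            intro l β' hl
            fin_cases l
            · intro x hx
              exact Finset.mem_erase.mpr ⟨fun he => hj0 (he ▸ hx), Finset.mem_univ x⟩
            · intro x hx
              exact Finset.mem_erase.mpr ⟨fun he => hj1 (he ▸ hx), Finset.mem_univ x⟩
            · exact absurd hl (by simp))
          (fun _ => true)
        rw [huniv j] at Hj
        simp only [Finset.prod_singleton, ifT] at Hj
        have H' : ∑ α, π α * (if α = β then (1:ℝ) else 0) * (if α = β then (1:ℝ) else 0) * 1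
              * p j α
            = ∑ α, π' α * Bl 0 α β * Bl 1 α β * 1 * p' j α := Hj
        have hL : ∑ α, π α * (if α = β then (1:ℝ) else 0) * (if α = β then (1:ℝ) else 0) * 1
            * p j α = π β * p j β := by
          rw [csum β _ (fun α hα => by simp [hα])]
          simp
        have hR : ∑ α, π' α * Bl 0 α β * Bl 1 α β * 1 * p' j α = π β * p' j (σ0 β) := by
          rw [csum (σ0 β) _ (fun α hα => by rw [hS0 β α hα]; ring)]
          rw [hSβ β, hTβ β, hπ'σ β]
          ring
        rw [hL, hR] at H'
        exact (mul_left_cancel₀ (hπne β) H').symm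
  refine ⟨Equiv.ofBijective σ0 (Finite.injective_iff_bijective.mp hinj), ?_, ?_⟩
  · intro j α
    exact final j α
  · intro α
    exact hπ'σ α
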